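/- Let K be a field of characteristic zero and n even. For every g ∈ SO(n,K) (that is, g·gᵀ = I and det g = 1) and all matrices A₁,…,A_{n/2} ∈ M(n,K), one has Q_n(g·A₁·g⁻¹, …, g·A_{n/2}·g⁻¹) = Q_n(A₁,…,A_{n/2}). -/

import Mathlib

open Matrix

/-- The function `Q_n : M(n,K)^{n/2} → K`,
`Q_n(A₁,…,A_{n/2}) = Σ_{σ ∈ S_n} sgn(σ) Π_i ((A_i)_{σ(2i−1),σ(2i)} − (A_i)_{σ(2i),σ(2i−1)})`
(indices written here in 0-based form). -/
noncomputable def Qfun (K : Type) [Field K] (n : ℕ)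
    (A : Fin (n / 2) → Matrix (Fin n) (Fin n) K) : K :=
  ∑ σ : Equiv.Perm (Fin n), ((Equiv.Perm.sign σ : ℤ) : K) *
    ∏ i : Fin (n / 2),
      (A i (σ ⟨2 * i.1, by have := i.isLt; omega⟩) (σ ⟨2 * i.1 + 1, by have := i.isLt; omega⟩)
        - A i (σ ⟨2 * i.1 + 1, by have := i.isLt; omega⟩) (σ ⟨2 * i.1, by have := i.isLt; omega⟩))

/-- First index of the `i`-th pair. -/
def QA {n : ℕ} (i : Fin (n / 2)) : Fin n := ⟨2 * i.1, by have := i.isLt; omega⟩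

/-- Second index of the `i`-th pair. -/
def QB {n : ℕ} (i : Fin (n / 2)) : Fin n := ⟨2 * i.1 + 1, by have := i.isLt; omega⟩

/-- Auxiliary multilinear version of `Qfun`. -/
noncomputable def Q2 (K : Type) [Field K] (n : ℕ)
    (B : Fin (n / 2) → Matrix (Fin n) (Fin n) K) : K :=
  ∑ σ : Equiv.Perm (Fin n), ((Equiv.Perm.sign σ : ℤ) : K) *
    ∏ i : Fin (n / 2), B i (σ (QA i)) (σ (QB i))

lemma Qfun_eq_Q2 (K : Type) [Field K] (n : ℕ)
    (A : Fin (n / 2) → Matrix (Fin n) (Fin n) K) :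
    Qfun K n A = Q2 K n (fun i => A i - (A i)ᵀ) := by
  simp [Qfun, Q2, QA, QB, Matrix.sub_apply, transpose_apply]

/-- The pairing equivalence `Fin (n/2) × Fin 2 ≃ Fin n` when `n` is even. -/
def pairEquiv (n : ℕ) (hn : Even n) : Fin (n / 2) × Fin 2 ≃ Fin n where
  toFun p := ⟨2 * p.1.1 + p.2.1, by
    obtain ⟨m, hm⟩ := hn; have := p.1.isLt; have := p.2.isLt; omega⟩
  invFun k := (⟨k.1 / 2, by obtain ⟨m, hm⟩ := hn; have := k.isLt; omega⟩,
    ⟨k.1 % 2, by omega⟩)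
  left_inv p := by
    rcases p with ⟨⟨i, hi⟩, ⟨j, hj⟩⟩
    simp only [Prod.mk.injEq]
    constructor <;> apply Fin.ext <;> simp <;> omega
  right_inv k := by apply Fin.ext; simp; omega

/-- Functions `Fin n → Fin n` correspond to tuples of pairs. -/
def funEquiv (n : ℕ) (hn : Even n) :
    (Fin n → Fin n) ≃ (Fin (n / 2) → Fin n × Fin n) where
  toFun f i := (f (QA i), f (QB i))
  invFun F k :=
    if k.1 % 2 = 0 then (F ⟨k.1 / 2, by obtain ⟨m, hm⟩ := hn; have := k.isLt; omega⟩).1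
    else (F ⟨k.1 / 2, by obtain ⟨m, hm⟩ := hn; have := k.isLt; omega⟩).2
  left_inv f := by
    funext k
    dsimp only
    by_cases h : k.1 % 2 = 0
    · rw [if_pos h]; congr 1; apply Fin.ext; show 2 * (k.1 / 2) = k.1; omega
    · rw [if_neg h]; congr 1; apply Fin.ext; show 2 * (k.1 / 2) + 1 = k.1; omega
  right_inv F := by
    funext i
    have h1 : (QA (n := n) i).1 % 2 = 0 := by show 2 * i.1 % 2 = 0; omega
    have h2 : ¬ (QB (n := n) i).1 % 2 = 0 := by show ¬ (2 * i.1 + 1) % 2 = 0; omega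
    have hAidx : ∀ (j : Fin (n / 2)) (h : (QA (n := n) j).1 / 2 < n / 2),
        (⟨(QA (n := n) j).1 / 2, h⟩ : Fin (n / 2)) = j := fun j h =>
      Fin.ext (by show 2 * j.1 / 2 = j.1; omega)
    have hBidx : ∀ (j : Fin (n / 2)) (h : (QB (n := n) j).1 / 2 < n / 2),
        (⟨(QB (n := n) j).1 / 2, h⟩ : Fin (n / 2)) = j := fun j h =>
      Fin.ext (by show (2 * j.1 + 1) / 2 = j.1; omega)
    show (if (QA (n := n) i).1 % 2 = 0 then _ else _,
          if (QB (n := n) i).1 % 2 = 0 then _ else _) = F i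
    rw [if_pos h1, if_neg h2, hAidx, hBidx]

lemma pairEquiv_fst (n : ℕ) (hn : Even n) (i : Fin (n / 2)) :
    pairEquiv n hn (i, 0) = QA i := by
  apply Fin.ext; simp [pairEquiv, QA]

lemma pairEquiv_snd (n : ℕ) (hn : Even n) (i : Fin (n / 2)) :
    pairEquiv n hn (i, 1) = QB i := by
  apply Fin.ext; simp [pairEquiv, QB]

/-- The inner sum over permutations equals a determinant of a column-substituted matrix. -/
lemma inner_det (K : Type) [Field K] (n : ℕ) (hn : Even n)
    (g : Matrix (Fin n) (Fin n) K) (f : Fin n → Fin n) :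
    ∑ σ : Equiv.Perm (Fin n), ((Equiv.Perm.sign σ : ℤ) : K) *
      ∏ i : Fin (n / 2), (g (σ (QA i)) (f (QA i)) * g (σ (QB i)) (f (QB i)))
    = (g.submatrix id f).det := by
  rw [Matrix.det_apply']
  refine Finset.sum_congr rfl fun σ _ => ?_
  congr 1
  have := Equiv.prod_comp (pairEquiv n hn)
    (fun j : Fin n => (g.submatrix id f) (σ j) j)
  rw [← this, Fintype.prod_prod_type]
  refine Finset.prod_congr rfl fun i _ => ?_
  rw [Fin.prod_univ_two, pairEquiv_fst, pairEquiv_snd]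
  simp [submatrix]

/-- Main invariance lemma for `Q2` under `B ↦ g B gᵀ`. -/
lemma Q2_conj (K : Type) [Field K] (n : ℕ) (hn : Even n)
    (g : Matrix (Fin n) (Fin n) K) (hgdet : g.det = 1)
    (B : Fin (n / 2) → Matrix (Fin n) (Fin n) K) :
    Q2 K n (fun i => g * B i * gᵀ) = Q2 K n B := by
  classical
  have expand : ∀ (C : Matrix (Fin n) (Fin n) K) (x y : Fin n),
      (g * C * gᵀ) x y = ∑ p : Fin n × Fin n, g x p.1 * C p.1 p.2 * g y p.2 := by
    intro C x y
    calc (g * C * gᵀ) x y = ∑ d, (∑ c, g x c * C c d) * g y d := by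
          rw [Matrix.mul_apply]
          exact Finset.sum_congr rfl fun d _ => by
            rw [Matrix.mul_apply, Matrix.transpose_apply]
      _ = ∑ d, ∑ c, g x c * C c d * g y d :=
          Finset.sum_congr rfl fun d _ => Finset.sum_mul _ _ _
      _ = ∑ c, ∑ d, g x c * C c d * g y d := Finset.sum_comm
      _ = ∑ p : Fin n × Fin n, g x p.1 * C p.1 p.2 * g y p.2 := by
          exact (Fintype.sum_prod_type
            (fun p : Fin n × Fin n => g x p.1 * C p.1 p.2 * g y p.2)).symm
  have step1 : Q2 K n (fun i => g * B i * gᵀ)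
      = ∑ f : Fin n → Fin n,
          (∏ i : Fin (n / 2), B i (f (QA i)) (f (QB i))) * (g.submatrix id f).det := by
    unfold Q2
    calc
      ∑ σ : Equiv.Perm (Fin n), ((Equiv.Perm.sign σ : ℤ) : K) *
          ∏ i : Fin (n / 2), (fun i => g * B i * gᵀ) i (σ (QA i)) (σ (QB i))
        = ∑ σ : Equiv.Perm (Fin n), ((Equiv.Perm.sign σ : ℤ) : K) *
            ∑ F : Fin (n / 2) → Fin n × Fin n, ∏ i : Fin (n / 2),
              g (σ (QA i)) (F i).1 * B i (F i).1 (F i).2 * g (σ (QB i)) (F i).2 := by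
          refine Finset.sum_congr rfl fun σ _ => ?_
          congr 1
          rw [show (∏ i : Fin (n / 2), (fun i => g * B i * gᵀ) i (σ (QA i)) (σ (QB i)))
              = ∏ i : Fin (n / 2), ∑ p : Fin n × Fin n,
                  g (σ (QA i)) p.1 * B i p.1 p.2 * g (σ (QB i)) p.2 from
            Finset.prod_congr rfl fun i _ => expand _ _ _]
          rw [Finset.prod_univ_sum, Fintype.piFinset_univ]
      _ = ∑ F : Fin (n / 2) → Fin n × Fin n, ∑ σ : Equiv.Perm (Fin n),
            ((Equiv.Perm.sign σ : ℤ) : K) * ∏ i : Fin (n / 2),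
              g (σ (QA i)) (F i).1 * B i (F i).1 (F i).2 * g (σ (QB i)) (F i).2 := by
          simp_rw [Finset.mul_sum]
          exact Finset.sum_comm
      _ = ∑ f : Fin n → Fin n, ∑ σ : Equiv.Perm (Fin n),
            ((Equiv.Perm.sign σ : ℤ) : K) * ∏ i : Fin (n / 2),
              g (σ (QA i)) (f (QA i)) * B i (f (QA i)) (f (QB i)) * g (σ (QB i)) (f (QB i)) :=
          (Fintype.sum_equiv (funEquiv n hn) _ _ fun f => rfl).symm
      _ = ∑ f : Fin n → Fin n, (∏ i : Fin (n / 2), B i (f (QA i)) (f (QB i))) *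
            ∑ σ : Equiv.Perm (Fin n), ((Equiv.Perm.sign σ : ℤ) : K) *
              ∏ i : Fin (n / 2), g (σ (QA i)) (f (QA i)) * g (σ (QB i)) (f (QB i)) := by
          refine Finset.sum_congr rfl fun f _ => ?_
          rw [Finset.mul_sum]
          refine Finset.sum_congr rfl fun σ _ => ?_
          rw [show (∏ i : Fin (n / 2),
                g (σ (QA i)) (f (QA i)) * B i (f (QA i)) (f (QB i)) * g (σ (QB i)) (f (QB i)))
              = (∏ i : Fin (n / 2), B i (f (QA i)) (f (QB i))) *
                ∏ i : Fin (n / 2), g (σ (QA i)) (f (QA i)) * g (σ (QB i)) (f (QB i)) from by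
            rw [← Finset.prod_mul_distrib]
            exact Finset.prod_congr rfl fun i _ => by ring]
          ring
      _ = ∑ f : Fin n → Fin n,
            (∏ i : Fin (n / 2), B i (f (QA i)) (f (QB i))) * (g.submatrix id f).det := by
          refine Finset.sum_congr rfl fun f _ => ?_
          rw [inner_det K n hn g f]
  rw [step1]
  have step2 : ∑ f : Fin n → Fin n,
        (∏ i : Fin (n / 2), B i (f (QA i)) (f (QB i))) * (g.submatrix id f).det
      = ∑ τ : Equiv.Perm (Fin n),
        (∏ i : Fin (n / 2), B i (τ (QA i)) (τ (QB i))) * (g.submatrix id ⇑τ).det := by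
    rw [← Finset.sum_subset (Finset.filter_subset (fun f => Function.Bijective f) Finset.univ)
      (fun f _ hf => ?_)]
    · exact Finset.sum_bij
        (fun p h => Equiv.ofBijective p (Finset.mem_filter.1 h).2)
        (fun _ _ => Finset.mem_univ _)
        (fun _ _ _ _ h => by injection h)
        (fun b _ => ⟨⇑b, Finset.mem_filter.2 ⟨Finset.mem_univ _, b.bijective⟩,
          Equiv.coe_fn_injective rfl⟩)
        (fun _ _ => rfl)
    · have hnb : ¬ Function.Bijective f := by
        intro hb
        exact hf (Finset.mem_filter.2 ⟨Finset.mem_univ _, hb⟩)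
      have hni : ¬ Function.Injective f := fun hi =>
        hnb (Finite.injective_iff_bijective.mp hi)
      rw [Function.Injective] at hni
      push_neg at hni
      obtain ⟨j1, j2, hval, hne⟩ := hni
      rw [Matrix.det_zero_of_column_eq hne
        (fun k => by simp only [Matrix.submatrix_apply, id, hval]), mul_zero]
  rw [step2]
  unfold Q2
  refine Finset.sum_congr rfl fun τ _ => ?_
  rw [Matrix.det_permute', hgdet, mul_one, mul_comm]

theorem stmt_10 (K : Type) [Field K] [CharZero K] (n : ℕ) (hn : Even n)
    (g : Matrix (Fin n) (Fin n) K) (hg : g * gᵀ = 1) (hgdet : g.det = 1)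
    (A : Fin (n / 2) → Matrix (Fin n) (Fin n) K) :
    Qfun K n (fun i => g * A i * g⁻¹) = Qfun K n A := by
  have hginv : g⁻¹ = gᵀ := Matrix.inv_eq_right_inv hg
  rw [hginv]
  rw [Qfun_eq_Q2, Qfun_eq_Q2]
  have hskew : (fun i => g * A i * gᵀ - (g * A i * gᵀ)ᵀ)
      = fun i => g * (A i - (A i)ᵀ) * gᵀ := by
    funext i
    simp [Matrix.transpose_mul, Matrix.mul_sub, Matrix.sub_mul, Matrix.mul_assoc]
  rw [show (fun i => (fun i => g * A i * gᵀ) i - ((fun i => g * A i * gᵀ) i)ᵀ)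
      = fun i => g * (A i - (A i)ᵀ) * gᵀ from hskew]
  exact Q2_conj K n hn g hgdet _
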